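/- Let T : ℕ → ℝ be a strictly increasing sequence of tenor dates T_0 < T_1 < T_2 < ⋯. Let q : ℝ → ℝ be antitone with q(t) > 0 for all t, Q(T) := ∫_0^T q(u) du, and let P : ℝ → ℝ satisfy P(T_i) > 0 for all i ≥ 1 and P(T_i) ≥ P(T_{i+1}) for all i ≥ 1 (nonincreasing bond prices). Let N : ℝ → ℝ be nondecreasing with N(T) ≥ 0 for all T. For n ≥ 1 define A_n := ∑_{i=1}^n (T_i − T_{i−1})·P(T_i), A^d_n := ∑_{i=1}^n (Q(T_i) − Q(T_{i−1}))·P(T_i) and s_n := N(T_n)/A^d_n. Then the sequence n ↦ (T_n − T_0)·s_n is nondecreasing on n ≥ 1. -/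
import Mathlib


open MeasureTheory Finset

/-- Discretely-paid CDS with nonincreasing bond prices: the maturity-weighted fair spread
`(T_n − T_0)·s_n` is nondecreasing in `n ≥ 1`, where `s_n = N(T_n)/A^d_n` is the fair
spread with defaultable annuity `A^d_n = ∑_{i=1}^n (Q(T_i) − Q(T_{i−1}))P(T_i)`,
`Q(T) = ∫_0^T q`. -/
theorem stmt_13
    (T : ℕ → ℝ) (hT : StrictMono T)
    (q : ℝ → ℝ) (hq : Antitone q) (hq0 : ∀ t, 0 < q t)
    (Q : ℝ → ℝ) (hQ : ∀ x, Q x = ∫ u in (0:ℝ)..x, q u)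
    (P : ℝ → ℝ) (hP0 : ∀ i, 1 ≤ i → 0 < P (T i))
    (hPmono : ∀ i, 1 ≤ i → P (T (i + 1)) ≤ P (T i))
    (N : ℝ → ℝ) (hN : Monotone N) (hN0 : ∀ x, 0 ≤ N x)
    (A Ad s : ℕ → ℝ)
    (hA : ∀ n, A n = ∑ i ∈ Icc 1 n, (T i - T (i - 1)) * P (T i))
    (hAd : ∀ n, Ad n = ∑ i ∈ Icc 1 n, (Q (T i) - Q (T (i - 1))) * P (T i))
    (hs : ∀ n, 1 ≤ n → s n = N (T n) / Ad n) :
    ∀ n m : ℕ, 1 ≤ n → n ≤ m → (T n - T 0) * s n ≤ (T m - T 0) * s m := by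
  have hint : ∀ a b : ℝ, IntervalIntegrable q volume a b := fun a b => hq.intervalIntegrable
  have hQd : ∀ a b : ℝ, Q b - Q a = ∫ u in a..b, q u := by
    intro a b
    rw [hQ b, hQ a, ← intervalIntegral.integral_add_adjacent_intervals (hint 0 a) (hint a b)]
    ring
  have hup : ∀ a b : ℝ, a ≤ b → (∫ u in a..b, q u) ≤ q a * (b - a) := by
    intro a b hab
    have h := intervalIntegral.integral_mono_on hab (hint a b)
      (intervalIntegrable_const (c := q a)) (fun x hx => hq hx.1)
    simpa [intervalIntegral.integral_const, smul_eq_mul, mul_comm] using h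
  have hlow : ∀ a b : ℝ, a ≤ b → q b * (b - a) ≤ ∫ u in a..b, q u := by
    intro a b hab
    have h := intervalIntegral.integral_mono_on hab
      (intervalIntegrable_const (c := q b)) (hint a b) (fun x hx => hq hx.2)
    simpa [intervalIntegral.integral_const, smul_eq_mul, mul_comm] using h
  set ℓ : ℕ → ℝ := fun i => T i - T (i - 1) with hℓ
  set b : ℕ → ℝ := fun i => (Q (T i) - Q (T (i - 1))) * P (T i) with hb
  have hℓpos : ∀ i : ℕ, 1 ≤ i → 0 < ℓ i := by
    intro i hi
    have : T (i - 1) < T i := hT (Nat.sub_lt hi one_pos)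
    simp only [hℓ]; linarith
  have hTle : ∀ i : ℕ, 1 ≤ i → T (i - 1) ≤ T i := fun i hi => by
    have := hℓpos i hi; simp only [hℓ] at this; linarith
  have hDlow : ∀ i : ℕ, 1 ≤ i → q (T i) * ℓ i ≤ Q (T i) - Q (T (i - 1)) := by
    intro i hi
    rw [hQd]
    exact hlow _ _ (hTle i hi)
  have hDhigh : ∀ i : ℕ, 1 ≤ i → Q (T i) - Q (T (i - 1)) ≤ q (T (i - 1)) * ℓ i := by
    intro i hi
    rw [hQd]
    exact hup _ _ (hTle i hi)
  have hDpos : ∀ i : ℕ, 1 ≤ i → 0 < Q (T i) - Q (T (i - 1)) := by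
    intro i hi
    have h1 := hDlow i hi
    have h2 := hℓpos i hi
    nlinarith [hq0 (T i)]
  have hbpos : ∀ i : ℕ, 1 ≤ i → 0 < b i := by
    intro i hi
    exact mul_pos (hDpos i hi) (hP0 i hi)
  -- density decreases stepwise
  have hstep : ∀ i : ℕ, 1 ≤ i → b (i + 1) * ℓ i ≤ b i * ℓ (i + 1) := by
    intro i hi
    have e1 : (i + 1) - 1 = i := by omega
    have h1 : Q (T (i + 1)) - Q (T i) ≤ q (T i) * ℓ (i + 1) := by
      have := hDhigh (i + 1) (by omega); rwa [e1] at this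
    have h2 : q (T i) * ℓ i ≤ Q (T i) - Q (T (i - 1)) := hDlow i hi
    have h3 : P (T (i + 1)) ≤ P (T i) := hPmono i hi
    have h4 : 0 < P (T (i + 1)) := hP0 (i + 1) (by omega)
    have h5 : 0 < ℓ i := hℓpos i hi
    have h6 : 0 < ℓ (i + 1) := hℓpos (i + 1) (by omega)
    have h7 : 0 < Q (T (i + 1)) - Q (T i) := by
      have := hDpos (i + 1) (by omega); rwa [e1] at this
    have h8 : 0 < q (T i) := hq0 (T i)
    have h9 : 0 < Q (T i) - Q (T (i - 1)) := hDpos i hi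
    have a1 := mul_le_mul_of_nonneg_right (mul_le_mul_of_nonneg_right h1 h4.le) h5.le
    have a2 := mul_le_mul_of_nonneg_right h2 (mul_nonneg h4.le h6.le)
    have a3 := mul_le_mul_of_nonneg_left h3 (mul_nonneg h9.le h6.le)
    simp only [hb, e1]
    nlinarith [a1, a2, a3]
  have hchain : ∀ i j : ℕ, 1 ≤ i → i ≤ j → b j * ℓ i ≤ b i * ℓ j := by
    intro i j hi hij
    induction j, hij using Nat.le_induction with
    | base => exact le_refl _
    | succ j hij ih =>
        have h1 := hstep j (by omega)
        have hbj := hbpos j (by omega)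
        have hℓj := hℓpos j (by omega)
        have hℓi := hℓpos i hi
        have hbi := hbpos i hi
        have hbj1 := hbpos (j + 1) (by omega)
        nlinarith
  have hAdrec : ∀ n : ℕ, Ad (n + 1) = Ad n + b (n + 1) := by
    intro n
    rw [hAd, hAd, Finset.sum_Icc_succ_top (by omega : 1 ≤ n + 1)]
  have hAd1 : Ad 1 = b 1 := by
    rw [hAd]; simp [hb]
  have hAdpos : ∀ n : ℕ, 1 ≤ n → 0 < Ad n := by
    intro n hn
    induction n, hn using Nat.le_induction with
    | base => rw [hAd1]; exact hbpos 1 le_rfl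
    | succ n hn ih =>
        rw [hAdrec n]
        have := hbpos (n + 1) (by omega)
        linarith
  have hTsplit : ∀ n : ℕ, T (n + 1) - T 0 = (T n - T 0) + ℓ (n + 1) := by
    intro n
    have e1 : (n + 1) - 1 = n := by omega
    simp only [hℓ, e1]; ring
  have hsum : ∀ n k : ℕ, 1 ≤ n → n < k → b k * (T n - T 0) ≤ Ad n * ℓ k := by
    intro n
    induction n with
    | zero => intro k h; omega
    | succ n ih =>
        intro k _ hk
        rcases Nat.eq_zero_or_pos n with hn0 | hn1
        · subst hn0
          have : T 1 - T 0 = ℓ 1 := by simp [hℓ]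
          rw [this, hAd1]
          exact hchain 1 k le_rfl (by omega)
        · have h1 : b k * (T n - T 0) ≤ Ad n * ℓ k := ih k hn1 (by omega)
          have h2 : b k * ℓ (n + 1) ≤ b (n + 1) * ℓ k := hchain (n + 1) k (by omega) (by omega)
          rw [hTsplit n, hAdrec n]
          nlinarith
  -- single step of the main monotonicity
  have hmain : ∀ n : ℕ, 1 ≤ n → (T n - T 0) * s n ≤ (T (n + 1) - T 0) * s (n + 1) := by
    intro n hn
    rw [hs n hn, hs (n + 1) (by omega)]
    have hA1 : 0 < Ad n := hAdpos n hn
    have hA2 : 0 < Ad (n + 1) := hAdpos (n + 1) (by omega)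
    have hkey : (T n - T 0) * Ad (n + 1) ≤ (T (n + 1) - T 0) * Ad n := by
      rw [hAdrec n, hTsplit n]
      have h1 := hsum n (n + 1) hn (by omega)
      have hTn0 : 0 < T n - T 0 := by
        have := hT (show 0 < n by omega); linarith
      have := hbpos (n + 1) (by omega)
      nlinarith
    have hNle : N (T n) ≤ N (T (n + 1)) := hN (hT (by omega)).le
    have hNn : 0 ≤ N (T n) := hN0 _
    have hTn0 : 0 < T n - T 0 := by
      have := hT (show 0 < n by omega); linarith
    have hTn1 : 0 < T (n + 1) - T 0 := by
      have := hT (show 0 < n + 1 by omega); linarith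
    rw [← mul_div_assoc, ← mul_div_assoc, div_le_div_iff₀ hA1 hA2]
    have c1 := mul_le_mul_of_nonneg_right hkey hNn
    have c2 := mul_le_mul_of_nonneg_left hNle (mul_nonneg hTn1.le hA1.le)
    nlinarith [c1, c2]
  intro n m hn hnm
  induction m, hnm using Nat.le_induction with
  | base => exact le_refl _
  | succ m hm ih => exact le_trans ih (hmain m (by omega))
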